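/- Let gcd(t, n) = 1 and set q̄ = q^t. If L(x) = Σ_{i=0}^{n-1} a_i x^{q^i} with a_i ∈ F_{q^n} induces a permutation of F_{q^n}, then L̄(x) = Σ_{i=0}^{n-1} a_{ti mod n} x^{q̄^i} induces a permutation of F_{q̄^n} = F_{q^{nt}}. -/

import Mathlib

open Finset

private lemma pow_sub_one_dvd_aux {q a b : ℕ} (hq : 2 ≤ q) (ha : 0 < a)
    (h : q ^ a - 1 ∣ q ^ b - 1) : a ∣ b := by
  have e1 : 1 ≤ q ^ (b % a) := Nat.one_le_pow _ _ (by omega)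
  have e2 : 1 ≤ q ^ (a * (b / a)) := Nat.one_le_pow _ _ (by omega)
  have key : q ^ a - 1 ∣ q ^ (b % a) - 1 := by
    have h1 : q ^ a - 1 ∣ q ^ (a * (b / a)) - 1 :=
      Nat.pow_sub_one_dvd_pow_sub_one q (Dvd.intro (b / a) rfl)
    have h2 : q ^ a - 1 ∣ (q ^ (a * (b / a)) - 1) * q ^ (b % a) := h1.mul_right _
    have hb : q ^ b = q ^ (a * (b / a)) * q ^ (b % a) := by
      rw [← pow_add, Nat.div_add_mod]
    have hmul : (q ^ (a * (b / a)) - 1) * q ^ (b % a)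
        = q ^ (a * (b / a)) * q ^ (b % a) - q ^ (b % a) := by
      rw [Nat.sub_mul, one_mul]
    have hge : q ^ (b % a) ≤ q ^ (a * (b / a)) * q ^ (b % a) :=
      Nat.le_mul_of_pos_left _ (by omega)
    have heq : q ^ (b % a) - 1
        = (q ^ b - 1) - ((q ^ (a * (b / a)) - 1) * q ^ (b % a)) := by
      rw [hb, hmul]; omega
    rw [heq]
    exact Nat.dvd_sub h h2
  have hlt : q ^ (b % a) - 1 < q ^ a - 1 := by
    have h1 : q ^ (b % a) < q ^ a := Nat.pow_lt_pow_right (by omega) (Nat.mod_lt _ ha)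
    omega
  have h0 : q ^ (b % a) - 1 = 0 := Nat.eq_zero_of_dvd_of_lt key hlt
  have hr : b % a = 0 := by
    by_contra hr
    have : q ≤ q ^ (b % a) := by
      calc q = q ^ 1 := (pow_one q).symm
      _ ≤ q ^ (b % a) := Nat.pow_le_pow_right (by omega) (by omega)
    omega
  exact Nat.dvd_of_mod_eq_zero hr

/-- Let `gcd(t,n) = 1` and `q̄ = q^t`. If `L(x) = ∑_{i<n} a_i x^{q^i}` permutes `F_{q^n}`,
then `L̄(x) = ∑_{i<n} a_{ti mod n} x^{q̄^i}` permutes `F_{q̄^n} = F_{q^{nt}}`. -/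
theorem stmt_13 (q n t : ℕ) (hq : IsPrimePow q) (hn : 0 < n) (ht : 0 < t)
    (hco : Nat.gcd t n = 1)
    (K E : Type*) [Field K] [Field E] [Fintype K] [Fintype E] [Algebra K E]
    (hK : Fintype.card K = q ^ n) (hE : Fintype.card E = q ^ (n * t))
    (a : ℕ → K)
    (hL : Function.Bijective (fun x : K => ∑ i ∈ Finset.range n, a i * x ^ q ^ i)) :
    Function.Bijective
      (fun x : E => ∑ i ∈ Finset.range n, algebraMap K E (a (t * i % n)) * x ^ (q ^ t) ^ i) := by
  classical
  have hq2 : 2 ≤ q := hq.two_le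
  obtain ⟨p, k, hp, hk, hpk⟩ := hq
  have hp' : Nat.Prime p := hp.nat_prime
  haveI := Fact.mk hp'
  -- characteristic of E is p
  haveI : CharP E (ringChar E) := ringChar.charP E
  have hchar : CharP E p := by
    obtain ⟨m, hm, hcard⟩ := FiniteField.card E (ringChar E)
    have h1 : p ∣ ringChar E ^ (m : ℕ) := by
      rw [← hcard, hE, ← hpk, ← pow_mul]
      exact dvd_pow_self p (by positivity)
    have h2 : p = ringChar E :=
      (Nat.prime_dvd_prime_iff_eq hp' hm).mp (hp'.dvd_of_dvd_pow h1)
    rw [h2]; exact ringChar.charP E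
  haveI := hchar
  have hQpow : ∀ i : ℕ, (q ^ t) ^ i = p ^ (k * (t * i)) := by
    intro i; rw [← hpk, ← pow_mul, ← pow_mul]
  -- the map is additive
  have hadd : ∀ x y : E,
      (∑ i ∈ Finset.range n, algebraMap K E (a (t * i % n)) * (x + y) ^ (q ^ t) ^ i)
      = (∑ i ∈ Finset.range n, algebraMap K E (a (t * i % n)) * x ^ (q ^ t) ^ i)
      + (∑ i ∈ Finset.range n, algebraMap K E (a (t * i % n)) * y ^ (q ^ t) ^ i) := by
    intro x y
    rw [← Finset.sum_add_distrib]
    refine Finset.sum_congr rfl fun i _ => ?_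
    rw [hQpow i, add_pow_char_pow, mul_add]
  set Lb : E →+ E := AddMonoidHom.mk'
    (fun x : E => ∑ i ∈ Finset.range n, algebraMap K E (a (t * i % n)) * x ^ (q ^ t) ^ i)
    hadd with hLbdef
  -- reduction of exponents modulo n on K
  have hKcard : ∀ c : K, c ^ q ^ n = c := fun c => by
    rw [← hK]; exact FiniteField.pow_card c
  have hred0 : ∀ (c : K) (s r : ℕ), c ^ q ^ (n * s + r) = c ^ q ^ r := by
    intro c s r
    induction s with
    | zero => simp
    | succ s ih =>
      have h1 : n * (s + 1) + r = (n * s + r) + n := by ring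
      rw [h1, pow_add, pow_mul, hKcard, ih]
  have hred : ∀ (c : K) (m : ℕ), c ^ q ^ m = c ^ q ^ (m % n) := by
    intro c m
    conv_lhs => rw [← Nat.div_add_mod m n]
    exact hred0 c (m / n) (m % n)
  -- reindexing sums along i ↦ t * i % n
  have hmod : ∀ a b : ℕ, a * (b % n) % n = a * b % n := by
    intro a b
    conv_rhs => rw [← Nat.div_add_mod b n]
    rw [mul_add, ← mul_assoc, mul_comm a n, mul_assoc, add_comm, Nat.add_mul_mod_self_left]
  have hmod' : ∀ a b : ℕ, (a % n) * b % n = a * b % n := by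
    intro a b; rw [mul_comm, hmod, mul_comm]
  have hbij : ∀ g : ℕ → K,
      ∑ i ∈ Finset.range n, g (t * i % n) = ∑ j ∈ Finset.range n, g j := by
    intro g
    rcases eq_or_lt_of_le (Nat.succ_le_of_lt hn) with h1 | h1
    · rw [← h1]; simp
    · obtain ⟨s, -, hs⟩ := Nat.exists_mul_mod_eq_one_of_coprime hco h1
      refine Finset.sum_nbij' (fun i => t * i % n) (fun j => s * j % n) ?_ ?_ ?_ ?_ ?_
      · intro i0 hi0; exact Finset.mem_range.mpr (Nat.mod_lt _ (by omega))
      · intro j0 hj0; exact Finset.mem_range.mpr (Nat.mod_lt _ (by omega))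
      · intro i0 hi0
        show s * (t * i0 % n) % n = i0
        rw [hmod, ← mul_assoc, mul_comm s t, ← hmod' (t * s) i0, hs, one_mul,
          Nat.mod_eq_of_lt (Finset.mem_range.mp hi0)]
      · intro j0 hj0
        show t * (s * j0 % n) % n = j0
        rw [hmod, ← mul_assoc, ← hmod' (t * s) j0, hs, one_mul,
          Nat.mod_eq_of_lt (Finset.mem_range.mp hj0)]
      · intro i0 hi0; rfl
  -- the submonoid of elements fixed by x ↦ x^(q^t)
  have hpow_mem : ∀ v : E, v ^ q ^ t = v → ∀ i, v ^ (q ^ t) ^ i = v := by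
    intro v hv i
    induction i with
    | zero => rw [pow_zero, pow_one]
    | succ i ih => rw [pow_succ, pow_mul, ih, hv]
  set M : Submonoid E :=
    { carrier := {x : E | x ^ q ^ t = x}
      one_mem' := one_pow _
      mul_mem' := fun {x y} hx hy => by
        simp only [Set.mem_setOf_eq] at *
        rw [mul_pow, hx, hy] } with hMdef
  -- the K-span of M is everything
  have hspan : Submodule.span K (M : Set E) = ⊤ := by
    set S : Subalgebra K E := Algebra.adjoin K (M : Set E) with hSdef
    haveI : Fintype S := Fintype.ofFinite S
    have hfield : IsField S := Finite.isField_of_domain S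
    -- a primitive (q^t - 1)-th root of unity
    obtain ⟨g, hg⟩ := IsCyclic.exists_generator (α := Eˣ)
    have hqt1 : 1 < q ^ t := Nat.one_lt_pow (by omega) (by omega)
    have hqnt1 : 1 < q ^ (n * t) := Nat.one_lt_pow (by positivity) (by omega)
    have hcardE : Fintype.card Eˣ = q ^ (n * t) - 1 := by
      rw [Fintype.card_units, hE]
    have horderg : orderOf g = q ^ (n * t) - 1 := by
      rw [orderOf_eq_card_of_forall_mem_zpowers hg, Nat.card_eq_fintype_card, hcardE]
    have hdvd1 : q ^ t - 1 ∣ q ^ (n * t) - 1 := by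
      rw [mul_comm]; exact Nat.pow_sub_one_dvd_pow_sub_one q (Dvd.intro n rfl)
    set ζu : Eˣ := g ^ ((q ^ (n * t) - 1) / (q ^ t - 1)) with hζu
    have hordζ : orderOf ζu = q ^ t - 1 := by
      rw [hζu, orderOf_pow, horderg,
        Nat.gcd_eq_right (Nat.div_dvd_of_dvd hdvd1),
        Nat.div_div_self hdvd1 (by omega)]
    have hζpow : (ζu : E) ^ (q ^ t - 1) = 1 := by
      have h1 : ζu ^ (q ^ t - 1) = 1 := by rw [← hordζ]; exact pow_orderOf_eq_one ζu
      rw [← Units.val_pow_eq_pow_val, h1, Units.val_one]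
    have hζM : (ζu : E) ∈ M := by
      show (ζu : E) ^ q ^ t = (ζu : E)
      have h1 : q ^ t = (q ^ t - 1) + 1 := by omega
      rw [h1, pow_succ, hζpow, one_mul]
    have hζS : (ζu : E) ∈ S := Algebra.subset_adjoin hζM
    set ζS : S := ⟨(ζu : E), hζS⟩ with hζSdef
    have hζS0 : ζS ≠ 0 := by
      intro h
      exact (Units.ne_zero ζu) (congrArg Subtype.val h)
    letI : Field S := hfield.toField
    have hval : Function.Injective (S.val.toRingHom.toMonoidHom : S →* E) :=
      fun x y h => Subtype.ext h
    have horderu : orderOf ζS = q ^ t - 1 := by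
      have h2 : orderOf ζS = orderOf ((ζu : E)) :=
        (orderOf_injective (S.val.toRingHom.toMonoidHom) hval ζS).symm
      have h3 : orderOf ((ζu : E)) = orderOf ζu := orderOf_units
      rw [h2, h3, hordζ]
    have hdvd2 : orderOf ζS ∣ Fintype.card S - 1 :=
      orderOf_dvd_of_pow_eq_one (FiniteField.pow_card_sub_one_eq_one ζS hζS0)
    set d : ℕ := Module.finrank K S with hd
    have hcardS : Fintype.card S = q ^ (n * d) := by
      rw [pow_mul, ← hK]
      exact Module.card_eq_pow_finrank (K := K) (V := S)
    have hdvd3 : q ^ t - 1 ∣ q ^ (n * d) - 1 := by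
      rw [← hcardS, ← horderu]; exact hdvd2
    have htnd : t ∣ n * d := pow_sub_one_dvd_aux hq2 ht hdvd3
    have htd : t ∣ d := Nat.Coprime.dvd_of_dvd_mul_left hco htnd
    have hle : Fintype.card S ≤ Fintype.card E :=
      Fintype.card_le_of_injective _ Subtype.val_injective
    have hndnt : n * d ≤ n * t := by
      rw [hcardS, hE] at hle
      exact (Nat.pow_le_pow_iff_right (by omega)).mp hle
    have hdle : d ≤ t := Nat.le_of_mul_le_mul_left hndnt hn
    have hd0 : d ≠ 0 := by
      intro h
      have hc1 : Fintype.card S = 1 := by rw [hcardS, h, mul_zero, pow_zero]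
      have h01 : (0 : S) = 1 := Fintype.card_le_one_iff.mp (le_of_eq hc1) 0 1
      exact zero_ne_one (congrArg Subtype.val h01)
    have hdt : d = t := le_antisymm hdle (Nat.le_of_dvd (Nat.pos_of_ne_zero hd0) htd)
    have hcards : Fintype.card S = Fintype.card E := by rw [hcardS, hdt, hE]
    have hsurj : ∀ x : E, x ∈ S := by
      have hbij2 : Function.Bijective (Subtype.val : S → E) :=
        (Fintype.bijective_iff_injective_and_card _).mpr ⟨Subtype.val_injective, hcards⟩
      intro x
      obtain ⟨y, hy⟩ := hbij2.2 x
      exact hy ▸ y.2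
    rw [eq_top_iff]
    rintro x -
    have hx : x ∈ Subalgebra.toSubmodule S := hsurj x
    rw [hSdef, Algebra.adjoin_eq_span, Submonoid.closure_eq] at hx
    exact hx
  -- a linearly independent spanning subset of M
  obtain ⟨b, hbM, hbspan, hbli⟩ := exists_linearIndependent K (M : Set E)
  rw [hspan] at hbspan
  -- L applied to 0 is 0
  have hLfun0 : (∑ i ∈ Finset.range n, a i * (0 : K) ^ q ^ i) = 0 := by
    refine Finset.sum_eq_zero fun i _ => ?_
    rw [zero_pow (pow_pos (show 0 < q by omega) i).ne', mul_zero]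
  -- key term computation
  have hterm : ∀ v : E, v ∈ b → ∀ r : K,
      Lb (r • v) = (∑ i ∈ Finset.range n, a i * r ^ q ^ i) • v := by
    intro v hv r
    have hvM : v ^ q ^ t = v := hbM hv
    show (∑ i ∈ Finset.range n, algebraMap K E (a (t * i % n)) * (r • v) ^ (q ^ t) ^ i) = _
    have hstep : ∀ i ∈ Finset.range n,
        algebraMap K E (a (t * i % n)) * (r • v) ^ (q ^ t) ^ i
        = algebraMap K E (a (t * i % n) * r ^ q ^ (t * i % n)) * v := by
      intro i _
      rw [Algebra.smul_def, mul_pow, hpow_mem v hvM i, ← map_pow, ← mul_assoc, ← map_mul]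
      congr 2
      rw [← pow_mul, hred r (t * i)]
    rw [Finset.sum_congr rfl hstep, ← Finset.sum_mul, ← map_sum,
      hbij (fun j => a j * r ^ q ^ j), ← Algebra.smul_def]
  -- kernel is trivial
  have hker : ∀ x : E, Lb x = 0 → x = 0 := by
    intro x hx
    have hxmem : x ∈ Submodule.span K b := by rw [hbspan]; trivial
    obtain ⟨c, hcsupp, hcsum⟩ := Submodule.mem_span_set.mp hxmem
    have hLbx : Lb x = c.sum fun v r => (∑ i ∈ Finset.range n, a i * r ^ q ^ i) • v := by
      rw [← hcsum, map_finsuppSum]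
      exact Finsupp.sum_congr fun v hv => hterm v (hcsupp hv) (c v)
    set l : E →₀ K := c.mapRange (fun r => ∑ i ∈ Finset.range n, a i * r ^ q ^ i) hLfun0
      with hldef
    have hlmem : l ∈ Finsupp.supported K K b := by
      intro v hv
      exact hcsupp (Finsupp.support_mapRange hv)
    have hlsum : (Finsupp.linearCombination K id) l = Lb x := by
      rw [Finsupp.linearCombination_apply, hldef,
        Finsupp.sum_mapRange_index (fun v => zero_smul K (id v))]
      exact hLbx.symm
    have hl0 : l = 0 := (linearIndepOn_iff (R := K) (v := id) (s := b)).mp hbli l hlmem (by rw [hlsum, hx])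
    have hc0 : c = 0 := by
      ext v
      have h1 : l v = 0 := by rw [hl0]; rfl
      have h2 : (∑ i ∈ Finset.range n, a i * (c v) ^ q ^ i) = 0 := by
        rw [hldef] at h1
        simpa [Finsupp.mapRange_apply] using h1
      exact hL.1 (h2.trans hLfun0.symm)
    rw [← hcsum, hc0, Finsupp.sum_zero_index]
  have hinj : Function.Injective
      (fun x : E => ∑ i ∈ Finset.range n, algebraMap K E (a (t * i % n)) * x ^ (q ^ t) ^ i) :=
    (injective_iff_map_eq_zero Lb).mpr hker
  exact Finite.injective_iff_bijective.mp hinj
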